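/- Let λ : ℕ → ℝ be nonnegative with ∑'_{j} λ j < ∞, and let P be the probability mass function on finitely supported functions ℕ →₀ ℕ defined by P(n) = exp(−∑'_{j} λ j) · ∏_{j ∈ n.support} (λ j)^(n j)/(n j)!. Then for every finite set J ⊆ ℕ and every function a : ℕ → ℕ, the P-probability of the event {n : ℕ →₀ ℕ | ∀ j ∈ J, n j = a j} equals ∏_{j ∈ J} exp(−λ j) · (λ j)^(a j)/(a j)!. In particular, under P the coordinates (n j) are independent and each n j is Poisson distributed with parameter λ j. -/

import Mathlib

open scoped BigOperators
open ENNReal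

namespace Stmt4Aux

noncomputable def pw (lam : ℕ → ℝ) (n : ℕ →₀ ℕ) : ℝ :=
  ∏ j ∈ n.support, lam j ^ (n j) / ((n j).factorial : ℝ)

lemma pw_nonneg (lam : ℕ → ℝ) (hnn : ∀ j, 0 ≤ lam j) (n : ℕ →₀ ℕ) : 0 ≤ pw lam n :=
  Finset.prod_nonneg fun j _ => div_nonneg (pow_nonneg (hnn j) _) (by positivity)

lemma pw_eq_prod (lam : ℕ → ℝ) (n : ℕ →₀ ℕ) {U : Finset ℕ} (h : n.support ⊆ U) :
    pw lam n = ∏ j ∈ U, lam j ^ (n j) / ((n j).factorial : ℝ) := by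
  refine Finset.prod_subset h fun j _ hj => ?_
  have : n j = 0 := Finsupp.notMem_support_iff.mp hj
  simp [this]

lemma tsum_pow_div_factorial (x : ℝ) :
    ∑' c : ℕ, x ^ c / (c.factorial : ℝ) = Real.exp x := by
  rw [Real.exp_eq_exp_ℝ, NormedSpace.exp_eq_tsum_div]

lemma tsum_pw_support_subset (lam : ℕ → ℝ) (hnn : ∀ j, 0 ≤ lam j) (S : Finset ℕ) :
    ∑' n : {n : ℕ →₀ ℕ // n.support ⊆ S}, ENNReal.ofReal (pw lam n) =
      ENNReal.ofReal (Real.exp (∑ j ∈ S, lam j)) := by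
  classical
  induction S using Finset.induction with
  | empty =>
      have hu : ∀ b : {n : ℕ →₀ ℕ // n.support ⊆ (∅ : Finset ℕ)},
          b = ⟨0, by simp⟩ := by
        rintro ⟨n, hn⟩
        exact Subtype.ext (Finsupp.support_eq_empty.mp (Finset.subset_empty.mp hn))
      rw [tsum_eq_single (⟨0, by simp⟩ : {n : ℕ →₀ ℕ // n.support ⊆ (∅ : Finset ℕ)})
        (fun b hb => absurd (hu b) hb)]
      simp [pw]
  | @insert k S hk ih =>
      let e : {n : ℕ →₀ ℕ // n.support ⊆ insert k S} ≃ ℕ × {n : ℕ →₀ ℕ // n.support ⊆ S} :=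
        { toFun := fun n => (n.1 k, ⟨n.1.erase k, by
            intro j hj
            rw [Finsupp.support_erase] at hj
            rcases Finset.mem_insert.mp (n.2 (Finset.mem_of_mem_erase hj)) with h | h
            · exact absurd h (Finset.ne_of_mem_erase hj)
            · exact h⟩)
          invFun := fun p => ⟨p.2.1.update k p.1, by
            exact (Finsupp.support_update_subset _ _).trans (Finset.insert_subset_insert _ p.2.2)⟩
          left_inv := by
            rintro ⟨n, hn⟩
            apply Subtype.ext
            ext j
            by_cases hj : j = k
            · subst hj; simp [Finsupp.coe_update]
            · simp [Finsupp.coe_update, Function.update_apply, hj, Finsupp.erase_apply]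
          right_inv := by
            rintro ⟨c, m, hm⟩
            have hmk : m k = 0 := by
              by_contra h
              exact hk (hm (Finsupp.mem_support_iff.mpr h))
            refine Prod.ext ?_ (Subtype.ext ?_)
            · simp [Finsupp.coe_update]
            · ext j
              by_cases hj : j = k
              · subst hj; simp [Finsupp.erase_apply, hmk]
              · simp [Finsupp.erase_apply, hj, Finsupp.coe_update, Function.update_apply] }
      have hstep : ∀ (c : ℕ) (m : {n : ℕ →₀ ℕ // n.support ⊆ S}),
          pw lam ((m : ℕ →₀ ℕ).update k c) = (lam k ^ c / (c.factorial : ℝ)) * pw lam m := by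
        intro c m
        have hsub : ((m : ℕ →₀ ℕ).update k c).support ⊆ insert k S :=
          (Finsupp.support_update_subset _ _).trans (Finset.insert_subset_insert _ m.2)
        rw [pw_eq_prod lam _ hsub, Finset.prod_insert hk]
        congr 1
        · simp [Finsupp.coe_update]
        · rw [pw_eq_prod lam (m : ℕ →₀ ℕ) m.2]
          refine Finset.prod_congr rfl fun j hj => ?_
          have : j ≠ k := fun h => hk (h ▸ hj)
          simp [Finsupp.coe_update, Function.update_apply, this]
      rw [← Equiv.tsum_eq e.symm]
      have : ∀ p : ℕ × {n : ℕ →₀ ℕ // n.support ⊆ S},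
          ENNReal.ofReal (pw lam ((e.symm p : {n : ℕ →₀ ℕ // n.support ⊆ insert k S}) : ℕ →₀ ℕ))
            = ENNReal.ofReal (lam k ^ p.1 / (p.1.factorial : ℝ)) * ENNReal.ofReal (pw lam p.2) := by
        rintro ⟨c, m⟩
        have : ((e.symm (c, m) : {n : ℕ →₀ ℕ // n.support ⊆ insert k S}) : ℕ →₀ ℕ)
            = (m : ℕ →₀ ℕ).update k c := rfl
        rw [this, hstep c m, ENNReal.ofReal_mul (div_nonneg (pow_nonneg (hnn k) _) (by positivity))]
      rw [tsum_congr this, ENNReal.tsum_prod']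
      have h2 : ∀ c : ℕ,
          (∑' m : {n : ℕ →₀ ℕ // n.support ⊆ S},
            ENNReal.ofReal (lam k ^ c / (c.factorial : ℝ)) * ENNReal.ofReal (pw lam m))
          = ENNReal.ofReal (lam k ^ c / (c.factorial : ℝ)) *
              ENNReal.ofReal (Real.exp (∑ j ∈ S, lam j)) := by
        intro c
        rw [ENNReal.tsum_mul_left, ih]
      rw [tsum_congr h2, ENNReal.tsum_mul_right]
      have h3 : (∑' c : ℕ, ENNReal.ofReal (lam k ^ c / (c.factorial : ℝ)))
          = ENNReal.ofReal (Real.exp (lam k)) := by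
        rw [← ENNReal.ofReal_tsum_of_nonneg
          (fun c => div_nonneg (pow_nonneg (hnn k) _) (by positivity))
          (Real.summable_pow_div_factorial (lam k)), tsum_pow_div_factorial]
      rw [h3, ← ENNReal.ofReal_mul (Real.exp_nonneg _), ← Real.exp_add,
        Finset.sum_insert hk]

lemma tsum_pw_zeroOn (lam : ℕ → ℝ) (hnn : ∀ j, 0 ≤ lam j) (hsum : Summable lam)
    (J : Finset ℕ) :
    ∑' n : {n : ℕ →₀ ℕ // ∀ j ∈ J, n j = 0}, ENNReal.ofReal (pw lam n) =
      ENNReal.ofReal (Real.exp ((∑' j, lam j) - ∑ j ∈ J, lam j)) := by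
  classical
  apply le_antisymm
  · rw [ENNReal.tsum_eq_iSup_sum]
    refine iSup_le fun A => ?_
    set S : Finset ℕ := (A.sup fun n => (n : ℕ →₀ ℕ).support) \ J with hS
    have hAS : ∀ n ∈ A, ((n : ℕ →₀ ℕ)).support ⊆ S := by
      intro n hn j hj
      have hle0 := Finset.le_sup
        (f := fun n : {n : ℕ →₀ ℕ // ∀ j ∈ J, n j = 0} => (n : ℕ →₀ ℕ).support) hn
      have hle : ((n : ℕ →₀ ℕ)).support ⊆ A.sup fun n => ((n : ℕ →₀ ℕ)).support := hle0
      refine Finset.mem_sdiff.mpr ⟨hle hj, ?_⟩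
      intro hjJ
      exact Finsupp.mem_support_iff.mp hj (n.2 j hjJ)
    set B : Finset {n : ℕ →₀ ℕ // n.support ⊆ S} :=
      A.attach.image (fun x => ⟨(x.1 : ℕ →₀ ℕ), hAS x.1 x.2⟩) with hB
    have hsum_eq : (∑ n ∈ A, ENNReal.ofReal (pw lam n))
        = ∑ m ∈ B, ENNReal.ofReal (pw lam m) := by
      have hinj' : ∀ x ∈ A.attach, ∀ y ∈ A.attach,
          (⟨(x.1 : ℕ →₀ ℕ), hAS x.1 x.2⟩ : {n : ℕ →₀ ℕ // n.support ⊆ S})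
            = ⟨(y.1 : ℕ →₀ ℕ), hAS y.1 y.2⟩ → x = y := by
        intro x _ y _ h
        have hv : (x.1 : ℕ →₀ ℕ) = (y.1 : ℕ →₀ ℕ) := by simpa using h
        exact Subtype.ext (Subtype.ext hv)
      rw [hB, Finset.sum_image hinj']
      exact (Finset.sum_attach A fun n => ENNReal.ofReal (pw lam ((n : ℕ →₀ ℕ)))).symm
    rw [hsum_eq]
    calc ∑ m ∈ B, ENNReal.ofReal (pw lam m)
        ≤ ∑' m : {n : ℕ →₀ ℕ // n.support ⊆ S}, ENNReal.ofReal (pw lam m) :=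
          ENNReal.sum_le_tsum B
      _ = ENNReal.ofReal (Real.exp (∑ j ∈ S, lam j)) := tsum_pw_support_subset lam hnn S
      _ ≤ ENNReal.ofReal (Real.exp ((∑' j, lam j) - ∑ j ∈ J, lam j)) := by
          apply ENNReal.ofReal_le_ofReal
          apply Real.exp_le_exp.mpr
          rw [le_sub_iff_add_le]
          have hdisj : Disjoint S J := Finset.sdiff_disjoint
          rw [← Finset.sum_union hdisj]
          exact hsum.sum_le_tsum _ (fun i _ => hnn i)
  · have hJr : ∀ᶠ N in Filter.atTop, J ⊆ Finset.range N := by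
      refine Filter.eventually_atTop.mpr ⟨J.sup id + 1, fun N hN j hj => ?_⟩
      exact Finset.mem_range.mpr (lt_of_le_of_lt (Finset.le_sup (f := id) hj)
        (lt_of_lt_of_le (Nat.lt_succ_self _) hN))
    have h2 : Filter.Tendsto (fun N => ∑ j ∈ Finset.range N \ J, lam j) Filter.atTop
        (nhds ((∑' j, lam j) - ∑ j ∈ J, lam j)) := by
      refine Filter.Tendsto.congr' ?_ ((hsum.hasSum.tendsto_sum_nat).sub_const (∑ j ∈ J, lam j))
      filter_upwards [hJr] with N hN
      exact (Finset.sum_sdiff_eq_sub hN).symm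
    have hh : Filter.Tendsto
        (fun N => ENNReal.ofReal (Real.exp (∑ j ∈ Finset.range N \ J, lam j)))
        Filter.atTop
        (nhds (ENNReal.ofReal (Real.exp ((∑' j, lam j) - ∑ j ∈ J, lam j)))) :=
      (ENNReal.continuous_ofReal.tendsto _).comp ((Real.continuous_exp.tendsto _).comp h2)
    refine le_of_tendsto hh (Filter.Eventually.of_forall fun N => ?_)
    set S : Finset ℕ := Finset.range N \ J with hS
    have hmap : ∀ m : {n : ℕ →₀ ℕ // n.support ⊆ S}, ∀ j ∈ J, (m : ℕ →₀ ℕ) j = 0 := by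
      intro m j hj
      by_contra h
      have := m.2 (Finsupp.mem_support_iff.mpr h)
      exact (Finset.mem_sdiff.mp this).2 hj
    have hinj : Function.Injective
        (fun m : {n : ℕ →₀ ℕ // n.support ⊆ S} =>
          (⟨(m : ℕ →₀ ℕ), hmap m⟩ : {n : ℕ →₀ ℕ // ∀ j ∈ J, n j = 0})) := by
      intro x y h
      exact Subtype.ext (by simpa using congrArg Subtype.val h)
    calc ENNReal.ofReal (Real.exp (∑ j ∈ S, lam j))
        = ∑' m : {n : ℕ →₀ ℕ // n.support ⊆ S}, ENNReal.ofReal (pw lam m) :=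
          (tsum_pw_support_subset lam hnn S).symm
      _ ≤ ∑' n : {n : ℕ →₀ ℕ // ∀ j ∈ J, n j = 0}, ENNReal.ofReal (pw lam n) :=
          ENNReal.tsum_comp_le_tsum_of_injective hinj _

lemma tsum_pw_zeroOn_real (lam : ℕ → ℝ) (hnn : ∀ j, 0 ≤ lam j) (hsum : Summable lam)
    (J : Finset ℕ) :
    ∑' n : {n : ℕ →₀ ℕ // ∀ j ∈ J, n j = 0}, pw lam n =
      Real.exp ((∑' j, lam j) - ∑ j ∈ J, lam j) := by
  have h1 := tsum_pw_zeroOn lam hnn hsum J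
  have hfin : ∀ n : {n : ℕ →₀ ℕ // ∀ j ∈ J, n j = 0},
      ENNReal.ofReal (pw lam n) ≠ ⊤ := fun _ => ENNReal.ofReal_ne_top
  have h2 := ENNReal.tsum_toReal_eq hfin
  rw [h1, ENNReal.toReal_ofReal (Real.exp_nonneg _)] at h2
  calc ∑' n : {n : ℕ →₀ ℕ // ∀ j ∈ J, n j = 0}, pw lam n
      = ∑' n : {n : ℕ →₀ ℕ // ∀ j ∈ J, n j = 0}, (ENNReal.ofReal (pw lam n)).toReal :=
        tsum_congr fun n => (ENNReal.toReal_ofReal (pw_nonneg lam hnn _)).symm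
    _ = Real.exp ((∑' j, lam j) - ∑ j ∈ J, lam j) := h2.symm

end Stmt4Aux

/-- Correctness of the Pólya–Boltzmann sampler Γ Z_Set: under the
Pólya–Boltzmann distribution on profiles `n : ℕ →₀ ℕ`, the coordinates are
independent Poisson variables: the probability that `n j = a j` for all
`j ∈ J` is `∏_{j ∈ J} exp(-λ j) (λ j)^(a j)/(a j)!`. -/
theorem stmt_4 (lam : ℕ → ℝ) (hnn : ∀ j, 0 ≤ lam j) (hsum : Summable lam)
    (J : Finset ℕ) (a : ℕ → ℕ) :
    ∑' n : {n : ℕ →₀ ℕ // ∀ j ∈ J, n j = a j},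
        Real.exp (-(∑' j, lam j)) *
          ∏ j ∈ (n : ℕ →₀ ℕ).support,
            lam j ^ ((n : ℕ →₀ ℕ) j) / (((n : ℕ →₀ ℕ) j).factorial : ℝ)
      = ∏ j ∈ J, Real.exp (-lam j) * lam j ^ a j / ((a j).factorial : ℝ) := by
  classical
  open Stmt4Aux in
  set aJ : ℕ →₀ ℕ := Finsupp.indicator J (fun j _ => a j) with haJ
  have haJ_mem : ∀ j ∈ J, aJ j = a j := fun j hj => Finsupp.indicator_of_mem hj _
  have haJ_not : ∀ j ∉ J, aJ j = 0 := fun j hj => Finsupp.indicator_of_notMem hj _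
  let e : {n : ℕ →₀ ℕ // ∀ j ∈ J, n j = 0} ≃ {n : ℕ →₀ ℕ // ∀ j ∈ J, n j = a j} :=
    { toFun := fun m => ⟨(m : ℕ →₀ ℕ) + aJ, fun j hj => by
        simp [m.2 j hj, haJ_mem j hj]⟩
      invFun := fun n => ⟨(n : ℕ →₀ ℕ) - aJ, fun j hj => by
        simp [Finsupp.tsub_apply, n.2 j hj, haJ_mem j hj]⟩
      left_inv := by
        rintro ⟨m, hm⟩
        apply Subtype.ext
        ext j
        simp [Finsupp.tsub_apply]
      right_inv := by
        rintro ⟨n, hn⟩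
        apply Subtype.ext
        ext j
        by_cases hj : j ∈ J
        · simp [Finsupp.tsub_apply, hn j hj, haJ_mem j hj]
        · simp [Finsupp.tsub_apply, haJ_not j hj] }
  set C : ℝ := ∏ j ∈ J, lam j ^ a j / ((a j).factorial : ℝ) with hC
  have key : ∀ m : {n : ℕ →₀ ℕ // ∀ j ∈ J, n j = 0},
      pw lam ((m : ℕ →₀ ℕ) + aJ) = pw lam (m : ℕ →₀ ℕ) * C := by
    intro m
    have hdisj : Disjoint ((m : ℕ →₀ ℕ)).support J := by
      rw [Finset.disjoint_left]
      intro j hj hjJ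
      exact Finsupp.mem_support_iff.mp hj (m.2 j hjJ)
    have hsub : (((m : ℕ →₀ ℕ) + aJ)).support ⊆ ((m : ℕ →₀ ℕ)).support ∪ J := by
      refine Finsupp.support_add.trans (Finset.union_subset_union (le_refl _) ?_)
      intro j hj
      by_contra h
      exact Finsupp.mem_support_iff.mp hj (haJ_not j h)
    rw [pw_eq_prod lam _ hsub, Finset.prod_union hdisj]
    congr 1
    · rw [pw_eq_prod lam (m : ℕ →₀ ℕ) (le_refl _)]
      refine Finset.prod_congr rfl fun j hj => ?_
      have hjJ : j ∉ J := Finset.disjoint_left.mp hdisj hj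
      simp [haJ_not j hjJ]
    · rw [hC]
      refine Finset.prod_congr rfl fun j hj => ?_
      simp [m.2 j hj, haJ_mem j hj]
  rw [← Equiv.tsum_eq e]
  have hre : ∀ m : {n : ℕ →₀ ℕ // ∀ j ∈ J, n j = 0},
      (Real.exp (-(∑' j, lam j)) *
        ∏ j ∈ ((e m : {n : ℕ →₀ ℕ // ∀ j ∈ J, n j = a j}) : ℕ →₀ ℕ).support,
          lam j ^ (((e m : {n : ℕ →₀ ℕ // ∀ j ∈ J, n j = a j}) : ℕ →₀ ℕ) j) /
            ((((e m : {n : ℕ →₀ ℕ // ∀ j ∈ J, n j = a j}) : ℕ →₀ ℕ) j).factorial : ℝ))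
      = (Real.exp (-(∑' j, lam j)) * C) * pw lam (m : ℕ →₀ ℕ) := by
    intro m
    have hval : ((e m : {n : ℕ →₀ ℕ // ∀ j ∈ J, n j = a j}) : ℕ →₀ ℕ)
        = (m : ℕ →₀ ℕ) + aJ := rfl
    show Real.exp (-(∑' j, lam j)) * pw lam ((e m : {n : ℕ →₀ ℕ // ∀ j ∈ J, n j = a j}) : ℕ →₀ ℕ)
        = _
    rw [hval, key m]
    ring
  rw [tsum_congr hre, tsum_mul_left,
    tsum_pw_zeroOn_real lam hnn hsum J]
  have hexp : Real.exp (-(∑' j, lam j)) * Real.exp ((∑' j, lam j) - ∑ j ∈ J, lam j)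
      = Real.exp (-(∑ j ∈ J, lam j)) := by
    rw [← Real.exp_add]; congr 1; ring
  have hrhs : ∏ j ∈ J, Real.exp (-lam j) * lam j ^ a j / ((a j).factorial : ℝ)
      = Real.exp (-(∑ j ∈ J, lam j)) * C := by
    rw [hC, ← Finset.sum_neg_distrib, Real.exp_sum, ← Finset.prod_mul_distrib]
    exact Finset.prod_congr rfl fun j hj => by ring
  rw [hrhs]
  calc Real.exp (-(∑' j, lam j)) * C * Real.exp ((∑' j, lam j) - ∑ j ∈ J, lam j)
      = (Real.exp (-(∑' j, lam j)) * Real.exp ((∑' j, lam j) - ∑ j ∈ J, lam j)) * C := by ring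
    _ = Real.exp (-(∑ j ∈ J, lam j)) * C := by rw [hexp]
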